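/- In a minimally oriented graph G^min of a bi-directed graph G, the relation v ⪯ w defined by 'v = w, or Bd(v) ⊊ Bd(w) in G, or there is a directed path from v to w in G^min' is a partial order on the vertex set. -/

import Mathlib

/-- Possible edge types between an ordered pair of distinct vertices of a
simple mixed graph.  `arrowTo` at `(v, w)` means `v → w`, `arrowFrom` means
`v ← w`, `undir` means `v − w` and `bidir` means `v ↔ w`. -/
inductive EType : Type
  | none | undir | arrowTo | arrowFrom | bidir
deriving DecidableEq

/-- The edge type seen from the reversed ordered pair of vertices. -/
def EType.mirror : EType → EType
  | .none => .none
  | .undir => .undir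
  | .arrowTo => .arrowFrom
  | .arrowFrom => .arrowTo
  | .bidir => .bidir

/-- A simple mixed graph: at most one edge (undirected, directed or
bi-directed) between any two distinct vertices, and no self loops. -/
structure MixedGraph (V : Type) where
  E : V → V → EType
  no_loop : ∀ v, E v v = .none
  symm : ∀ v w, E w v = (E v w).mirror

/-- `(a, b, c)` are three consecutive vertices on the path `p`. -/
def ConsecTriple {V : Type} (p : List V) (a b c : V) : Prop :=
  ∃ l1 l2, p = l1 ++ a :: b :: c :: l2

namespace MixedGraph

variable {V : Type} (G : MixedGraph V)

/-- `v − w` is an edge of `G`. -/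
def Undir (v w : V) : Prop := G.E v w = .undir

/-- `v → w` is an edge of `G`. -/
def Dir (v w : V) : Prop := G.E v w = .arrowTo

/-- `v ↔ w` is an edge of `G`. -/
def Bidir (v w : V) : Prop := G.E v w = .bidir

/-- `v` and `w` are adjacent (joined by some edge). -/
def Adj (v w : V) : Prop := G.E v w ≠ .none

/-- The edge between `a` and `b` has an arrowhead at `b`. -/
def HeadAt (a b : V) : Prop := G.E a b = .arrowTo ∨ G.E a b = .bidir

/-- Closed boundary: `v` together with its adjacent vertices. -/
def Bd (v : V) : Set V := insert v {w | G.Adj v w}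

/-- A set of vertices is complete if all of its pairs of distinct
vertices are adjacent. -/
def Complete (S : Set V) : Prop := ∀ v ∈ S, ∀ w ∈ S, v ≠ w → G.Adj v w

/-- A vertex is simplicial if its closed boundary is complete. -/
def Simplicial (v : V) : Prop := G.Complete (G.Bd v)

/-- `v` is an ancestor of `w`: `v = w` or there is a directed path from
`v` to `w`. -/
def Anc (v w : V) : Prop := Relation.ReflTransGen G.Dir v w

/-- The set of ancestors of vertices in `C`. -/
def anSet (C : Set V) : Set V := {v | ∃ c ∈ C, G.Anc v c}

/-- `G` is an ancestral graph. -/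
def Ancestral : Prop :=
  (∀ v w, G.Dir v w → ¬ G.Anc w v) ∧
  (∀ v w, G.Undir v w → ∀ u, ¬ G.HeadAt u v) ∧
  (∀ v w, G.Bidir v w → ¬ G.Anc v w)

/-- The boundary containment property. -/
def BdContain : Prop :=
  (∀ v w, G.Undir v w → G.Bd v = G.Bd w) ∧
  (∀ v w, G.Dir v w → G.Bd v ⊆ G.Bd w)

/-- `b` is a collider between consecutive neighbours `a` and `c`. -/
def Collider (a b c : V) : Prop := G.HeadAt a b ∧ G.HeadAt c b

/-- A path: a list of distinct vertices, consecutive ones adjacent. -/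
def IsPath (p : List V) : Prop := p.Nodup ∧ p.Chain' G.Adj

/-- `p` is an m-connecting path given `C`: every non-collider on it is
outside `C` and every collider on it is an ancestor of `C`. -/
def IsMConnPath (C : Set V) (p : List V) : Prop :=
  G.IsPath p ∧
  ∀ a b c, ConsecTriple p a b c →
    (G.Collider a b c → b ∈ G.anSet C) ∧ (¬ G.Collider a b c → b ∉ C)

/-- `v` and `w` are m-connected given `C`. -/
def MConn (v w : V) (C : Set V) : Prop :=
  ∃ p, G.IsMConnPath C p ∧ p.head? = some v ∧ p.getLast? = some w

/-- `v` and `w` are m-separated given `C`. -/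
def MSep (v w : V) (C : Set V) : Prop := ¬ G.MConn v w C

/-- A maximal (ancestral) graph: every pair of distinct non-adjacent
vertices is m-separated given some set. -/
def Maximal : Prop :=
  ∀ v w, v ≠ w → ¬ G.Adj v w → ∃ C : Set V, v ∉ C ∧ w ∉ C ∧ G.MSep v w C

/-- `G` is a bi-directed graph. -/
def Bidirected : Prop := ∀ v w, G.E v w = .none ∨ G.E v w = .bidir

/-- `G` is an undirected graph. -/
def UndirectedG : Prop := ∀ v w, G.E v w = .none ∨ G.E v w = .undir

/-- `G` is a directed acyclic graph. -/
def IsDAG : Prop :=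
  (∀ v w, G.E v w = .none ∨ G.E v w = .arrowTo ∨ G.E v w = .arrowFrom) ∧
  (∀ v w, G.Dir v w → ¬ G.Anc w v)

/-- `G` and `H` have the same skeleton. -/
def SameSkeleton (H : MixedGraph V) : Prop := ∀ v w, G.Adj v w ↔ H.Adj v w

/-- `G` and `H` are Markov equivalent: their m-separation relations
coincide. -/
def MarkovEquiv (H : MixedGraph V) : Prop :=
  ∀ v w (C : Set V), v ≠ w → v ∉ C → w ∉ C → (G.MSep v w C ↔ H.MSep v w C)

open Classical in
/-- The edge map obtained from `G` by dropping all arrowheads at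
simplicial vertices. -/
noncomputable def dropE (v w : V) : EType :=
  match G.E v w with
  | .none => .none
  | .undir => .undir
  | .arrowTo => if G.Simplicial w then .undir else .arrowTo
  | .arrowFrom => if G.Simplicial v then .undir else .arrowFrom
  | .bidir =>
      if G.Simplicial v then (if G.Simplicial w then .undir else .arrowTo)
      else (if G.Simplicial w then .arrowFrom else .bidir)

/-- The graph obtained from `G` by dropping all arrowheads at simplicial
vertices; for a bi-directed graph `G` this is the simplicial graph `Gˢ`. -/
noncomputable def drop : MixedGraph V where
  E := G.dropE
  no_loop v := by simp [dropE, G.no_loop]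
  symm v w := by
    unfold dropE
    rw [G.symm v w]
    cases h : G.E v w <;>
      simp only [EType.mirror] <;> split_ifs <;> simp_all [EType.mirror]

open Classical in
/-- The edge map of the minimally oriented graph `G^min_<`: starting from
the simplicial graph, each bi-directed edge `v ↔ w` with `Bd v ⊆ Bd w`
and `v < w` is replaced by `v → w`. -/
noncomputable def gminE [LinearOrder V] (v w : V) : EType :=
  match G.dropE v w with
  | .bidir =>
      if G.Bd v ⊆ G.Bd w ∧ v < w then .arrowTo
      else if G.Bd w ⊆ G.Bd v ∧ w < v then .arrowFrom
      else .bidir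
  | e => e

/-- The graph `G^min_<` produced by Algorithm 4.2 from `G` and the total
order on `V`. -/
noncomputable def gmin [LinearOrder V] : MixedGraph V where
  E := G.gminE
  no_loop v := by
    have h := G.drop.no_loop v
    simp only [drop] at h
    simp [gminE, h]
  symm v w := by
    have h := G.drop.symm v w
    simp only [drop] at h
    unfold gminE
    rw [h]
    cases hE : G.dropE v w <;> simp only [EType.mirror]
    case bidir =>
      by_cases c1 : G.Bd v ⊆ G.Bd w ∧ v < w
      · have c2 : ¬ (G.Bd w ⊆ G.Bd v ∧ w < v) := fun h' => lt_asymm c1.2 h'.2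
        simp [c1, c2, EType.mirror]
      · by_cases c2 : G.Bd w ⊆ G.Bd v ∧ w < v
        · simp [c1, c2, EType.mirror]
        · simp [c1, c2, EType.mirror]

/-- Total number of arrowheads of `G`: the number of directed edges plus
twice the number of bi-directed edges. -/
noncomputable def arr : ℕ :=
  {p : V × V | G.Dir p.1 p.2}.ncard + {p : V × V | G.Bidir p.1 p.2}.ncard

end MixedGraph

/-- `Gm` is a minimally oriented graph for `G`. -/
def MinOriented {V : Type} (G Gm : MixedGraph V) : Prop :=
  Gm.Ancestral ∧ Gm.Maximal ∧ G.MarkovEquiv Gm ∧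
  ∀ H : MixedGraph V, H.Ancestral → H.Maximal → G.MarkovEquiv H → Gm.arr ≤ H.arr

section Aux

variable {V : Type}

lemma EType.mirror_eq_none : ∀ {e : EType}, e.mirror = .none → e = .none := by
  intro e; cases e <;> simp [EType.mirror]

lemma MixedGraph.Adj.symm' {G : MixedGraph V} {v w : V} (h : G.Adj v w) : G.Adj w v := by
  unfold MixedGraph.Adj at *
  rw [G.symm v w]
  intro hc
  exact h (EType.mirror_eq_none hc)

lemma MixedGraph.Adj.ne {G : MixedGraph V} {v w : V} (h : G.Adj v w) : v ≠ w := by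
  rintro rfl; exact h (G.no_loop v)

lemma consecTriple_two {u w a b c : V} (h : ConsecTriple [u, w] a b c) : False := by
  obtain ⟨l1, l2, hl⟩ := h
  have := congrArg List.length hl
  simp [List.length_append] at this
  omega

lemma consecTriple_three {u v w a b c : V} (h : ConsecTriple [u, v, w] a b c) :
    a = u ∧ b = v ∧ c = w := by
  obtain ⟨l1, l2, hl⟩ := h
  have hlen := congrArg List.length hl
  simp [List.length_append] at hlen
  have h1 : l1 = [] := List.eq_nil_of_length_eq_zero (by omega)
  subst h1
  simp at hl
  tauto

/-- An adjacent pair is m-connected given any set. -/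
lemma MixedGraph.mconn_of_adj (H : MixedGraph V) {v w : V} (h : H.Adj v w) (C : Set V) :
    H.MConn v w C := by
  refine ⟨[v, w], ⟨⟨by simp [h.ne], by simp [List.Chain', List.isChain_cons_cons, h]⟩, ?_⟩, by simp, by simp⟩
  intro a b c hc
  exact (consecTriple_two hc).elim

lemma MixedGraph.bidir_anc {G : MixedGraph V} (hG : G.Bidirected) {v c : V}
    (h : G.Anc v c) : v = c := by
  induction h with
  | refl => rfl
  | @tail b c _ hd _ =>
      rcases hG b c with h' | h' <;> simp [MixedGraph.Dir, h'] at hd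

/-- In a bi-directed graph, nonadjacent vertices are m-separated by `∅`. -/
lemma MixedGraph.bidir_msep {G : MixedGraph V} (hG : G.Bidirected) {v w : V}
    (hne : v ≠ w) (hna : ¬ G.Adj v w) : G.MSep v w (∅ : Set V) := by
  rintro ⟨p, ⟨⟨hnd, hch⟩, htr⟩, hh, hl⟩
  match p, hh, hl with
  | [a], hh, hl =>
      simp at hh hl
      exact hne (hh.symm.trans hl)
  | [a, b], hh, hl =>
      simp at hh hl
      simp only [List.Chain', List.isChain_cons_cons] at hch
      subst hh; subst hl
      exact hna hch.1
  | (a :: b :: c :: rest), hh, hl =>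
      have htrip : ConsecTriple (a :: b :: c :: rest) a b c := ⟨[], rest, rfl⟩
      simp only [List.Chain', List.isChain_cons_cons] at hch
      have hab : G.E a b = .bidir := (hG a b).resolve_left hch.1
      have hcb : G.E c b = .bidir := by
        rw [G.symm b c, (hG b c).resolve_left hch.2.1]; rfl
      have hcol : G.Collider a b c := ⟨Or.inr hab, Or.inr hcb⟩
      obtain ⟨c', hc', _⟩ := (htr a b c htrip).1 hcol
      exact hc'

/-- `G` and `Gm` have the same skeleton. -/
lemma skel_aux {G Gm : MixedGraph V} (hG : G.Bidirected) (hmin : MinOriented G Gm)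
    {v w : V} : G.Adj v w ↔ Gm.Adj v w := by
  obtain ⟨hanc, hmax, hme, -⟩ := hmin
  constructor
  · intro h
    by_contra hGm
    obtain ⟨C, hv, hw, hsep⟩ := hmax v w h.ne hGm
    exact ((hme v w C h.ne hv hw).mpr hsep) (G.mconn_of_adj h C)
  · intro h
    by_contra hGa
    have hsep : G.MSep v w ∅ := MixedGraph.bidir_msep hG h.ne hGa
    exact ((hme v w ∅ h.ne (by simp) (by simp)).mp hsep) (Gm.mconn_of_adj h ∅)

/-- Boundary containment: a directed edge of `Gm` implies containment of
closed boundaries in `G`. -/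
lemma bd_subset_aux {G Gm : MixedGraph V} (hG : G.Bidirected) (hmin : MinOriented G Gm)
    {v w : V} (hd : Gm.Dir v w) : G.Bd v ⊆ G.Bd w := by
  have hadjm : Gm.Adj v w := by unfold MixedGraph.Adj; rw [hd]; simp
  have hvw : G.Adj v w := (skel_aux hG hmin).mpr hadjm
  have hnevw : v ≠ w := hvw.ne
  intro u hu
  simp only [MixedGraph.Bd, Set.mem_insert_iff, Set.mem_setOf_eq] at hu ⊢
  rcases hu with rfl | hadj
  · exact Or.inr hvw.symm'
  by_contra huw
  push_neg at huw
  obtain ⟨hnew, hnadj⟩ := huw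
  have hneuv : u ≠ v := hadj.symm'.ne
  have hadjuv : G.Adj u v := hadj.symm'
  have hnadjG : ¬ G.Adj u w := fun h => hnadj h.symm'
  have hnadjGm : ¬ Gm.Adj u w := fun h => hnadjG ((skel_aux hG hmin).mpr h)
  have hskel : Gm.Adj u v := (skel_aux hG hmin).mp hadjuv
  obtain ⟨hanc, hmax, hme, -⟩ := hmin
  obtain ⟨C, huC, hwC, hsepm⟩ := hmax u w hnew hnadjGm
  have hsepg : G.MSep u w C := (hme u w C hnew huC hwC).mpr hsepm
  -- edge types in G
  have euv : G.E u v = .bidir := (hG u v).resolve_left hadjuv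
  have evw : G.E v w = .bidir := (hG v w).resolve_left hvw
  have ewv : G.E w v = .bidir := by rw [G.symm v w, evw]; rfl
  have hvC : v ∉ C := by
    intro hvC
    apply hsepg
    refine ⟨[u, v, w], ⟨⟨by simp [hneuv, hnew, hnevw], ?_⟩, ?_⟩, by simp, by simp⟩
    · simp only [List.Chain', List.isChain_cons_cons]
      exact ⟨hadjuv, hvw, by simp⟩
    · intro a b c hc
      obtain ⟨ha, hb, hc'⟩ := consecTriple_three hc
      rw [ha, hb, hc']
      refine ⟨fun _ => ⟨v, hvC, Relation.ReflTransGen.refl⟩, fun hnc => ?_⟩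
      exact absurd ⟨Or.inr euv, Or.inr ewv⟩ hnc
  -- now the path u ~ v → w is m-connecting in Gm given C
  apply hsepm
  refine ⟨[u, v, w], ⟨⟨by simp [hneuv, hnew, hnevw], ?_⟩, ?_⟩, by simp, by simp⟩
  · simp only [List.Chain', List.isChain_cons_cons]
    exact ⟨hskel, hadjm, by simp⟩
  · intro a b c hc
    obtain ⟨ha, hb, hc'⟩ := consecTriple_three hc
    rw [ha, hb, hc']
    have hnc : ¬ Gm.Collider u v w := by
      rintro ⟨-, h2⟩
      have : Gm.E w v = .arrowFrom := by rw [Gm.symm v w, hd]; rfl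
      rcases h2 with h2 | h2 <;> rw [this] at h2 <;> exact absurd h2 (by simp)
    exact ⟨fun hcol => absurd hcol hnc, fun _ => hvC⟩

lemma anc_bd_subset_aux {G Gm : MixedGraph V} (hG : G.Bidirected)
    (hmin : MinOriented G Gm) {v w : V} (h : Relation.ReflTransGen Gm.Dir v w) :
    G.Bd v ⊆ G.Bd w := by
  induction h with
  | refl => exact subset_rfl
  | tail _ hd ih => exact ih.trans (bd_subset_aux hG hmin hd)

end Aux

/-- For a minimally oriented graph `Gm` of a bi-directed
graph `G`, the relation "`v = w`, or `Bd v ⊊ Bd w` in `G`, or there is a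
directed path from `v` to `w` in `Gm`" is a partial order. -/
theorem stmt15 {V : Type} [Finite V] (G Gm : MixedGraph V) (hG : G.Bidirected)
    (hmin : MinOriented G Gm) :
    IsPartialOrder V
      (fun v w => v = w ∨ G.Bd v ⊂ G.Bd w ∨ Relation.ReflTransGen Gm.Dir v w) := by
  have hbd : ∀ {v w : V}, Relation.ReflTransGen Gm.Dir v w → G.Bd v ⊆ G.Bd w :=
    fun h => anc_bd_subset_aux hG hmin h
  have hanc := hmin.1
  refine { refl := fun v => Or.inl rfl, trans := ?_, antisymm := ?_ }
  · intro a b c hab hbc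
    rcases hab with rfl | h1 | h1
    · exact hbc
    · rcases hbc with rfl | h2 | h2
      · exact Or.inr (Or.inl h1)
      · exact Or.inr (Or.inl (h1.trans h2))
      · exact Or.inr (Or.inl (ssubset_of_ssubset_of_subset h1 (hbd h2)))
    · rcases hbc with rfl | h2 | h2
      · exact Or.inr (Or.inr h1)
      · exact Or.inr (Or.inl (ssubset_of_subset_of_ssubset (hbd h1) h2))
      · exact Or.inr (Or.inr (h1.trans h2))
  · intro a b hab hba
    rcases hab with rfl | h1 | h1
    · rfl
    · rcases hba with rfl | h2 | h2
      · rfl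
      · exact absurd (h1.trans h2) (ssubset_irrefl _)
      · exact absurd (ssubset_of_ssubset_of_subset h1 (hbd h2)) (ssubset_irrefl _)
    · rcases hba with rfl | h2 | h2
      · rfl
      · exact absurd (ssubset_of_ssubset_of_subset h2 (hbd h1)) (ssubset_irrefl _)
      · rcases h1.cases_head with rfl | ⟨x, hax, hxb⟩
        · rfl
        · exact absurd (hxb.trans h2) (hanc.1 a x hax)
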